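/- Let G be a discrete finitely generated group, let ←G = lim_{←i}(G/Γ_i, π_i) be a G-odometer (so each Γ_i is normal and ←G is a compact topological group under coordinatewise multiplication, containing the image of G as a dense subgroup), and let (X, G) be a topological dynamical system. If p : ←G → X is a factor map and e denotes the identity element of ←G, then H := p^{-1}({p(e)}) is a closed subgroup of ←G, for every g ∈ ←G one has p^{-1}({p(g)}) = gH, and p induces a G-equivariant homeomorphism from the quotient space ←G/H onto X. -/

import Mathlib

open Pointwise MeasureTheory

/-- Compatibility condition defining the inverse limit `lim_{←i} (G/Γᵢ, πᵢ)`: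
a sequence of cosets is compatible if any representative of the `(i+1)`-th coordinate
also represents the `i`-th coordinate. -/
def Compat {G : Type*} [Group G] (Γ : ℕ → Subgroup G) (x : ∀ i, G ⧸ Γ i) : Prop :=
  ∀ (i : ℕ) (g : G),
    (QuotientGroup.mk g : G ⧸ Γ (i + 1)) = x (i + 1) →
    (QuotientGroup.mk g : G ⧸ Γ i) = x i

/-- The subodometer `←G = lim_{←i} (G/Γᵢ, πᵢ)` associated to a sequence of subgroups. -/
def Subodometer {G : Type*} [Group G] (Γ : ℕ → Subgroup G) : Type _ :=
  { x : ∀ i, G ⧸ Γ i // Compat Γ x }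

/-- Topology of the subodometer: subspace topology of the product of the (discrete)
coset spaces. -/
instance {G : Type*} [Group G] (Γ : ℕ → Subgroup G) [TopologicalSpace G] :
    TopologicalSpace (Subodometer Γ) :=
  instTopologicalSpaceSubtype

lemma compat_smul {G : Type*} [Group G] (Γ : ℕ → Subgroup G) (g : G) (x : ∀ i, G ⧸ Γ i)
    (hx : Compat Γ x) : Compat Γ (fun i => g • x i) := by
  intro i h hh
  change (QuotientGroup.mk h : G ⧸ Γ (i + 1)) = g • x (i + 1) at hh
  show (QuotientGroup.mk h : G ⧸ Γ i) = g • x i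
  obtain ⟨a, ha⟩ := QuotientGroup.mk_surjective (x (i + 1))
  have h1 : (QuotientGroup.mk (g * a) : G ⧸ Γ (i + 1)) = g • x (i + 1) := by
    rw [← ha]; rfl
  rw [← h1] at hh
  have h2 : (QuotientGroup.mk (g⁻¹ * h) : G ⧸ Γ (i + 1)) = QuotientGroup.mk a := by
    rw [QuotientGroup.eq] at hh ⊢
    simpa [mul_assoc] using hh
  have h3 := hx i _ (h2.trans ha)
  have h4 : (QuotientGroup.mk (g * (g⁻¹ * h)) : G ⧸ Γ i) = g • x i := by
    rw [show (QuotientGroup.mk (g * (g⁻¹ * h)) : G ⧸ Γ i)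
        = g • (QuotientGroup.mk (g⁻¹ * h) : G ⧸ Γ i) from rfl, h3]
  simpa [mul_assoc] using h4

/-- The action of `G` on the subodometer by coordinatewise left multiplication. -/
instance {G : Type*} [Group G] (Γ : ℕ → Subgroup G) : MulAction G (Subodometer Γ) where
  smul g x := ⟨fun i => g • x.1 i, compat_smul Γ g x.1 x.2⟩
  one_smul x := Subtype.ext (funext fun i => one_smul G (x.1 i))
  mul_smul g h x := Subtype.ext (funext fun i => mul_smul g h (x.1 i))

/-- The distinguished point `e` of the subodometer: the sequence of cosets of the
neutral element. -/
def odoE {G : Type*} [Group G] (Γ : ℕ → Subgroup G) (hΓ : ∀ i, Γ (i + 1) ≤ Γ i) :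
    Subodometer Γ :=
  ⟨fun i => QuotientGroup.mk 1, by
    intro i g hg
    rw [QuotientGroup.eq] at hg ⊢
    exact hΓ i hg⟩

/-- The canonical map `τ : G → ←G`, `τ(g) = (gΓᵢ)ᵢ`. -/
def odoTau {G : Type*} [Group G] (Γ : ℕ → Subgroup G) (hΓ : ∀ i, Γ (i + 1) ≤ Γ i) (g : G) :
    Subodometer Γ :=
  ⟨fun i => QuotientGroup.mk g, by
    intro i h hh
    rw [QuotientGroup.eq] at hh ⊢
    exact hΓ i hh⟩

/-- A factor map between two `G`-systems: a continuous surjection commuting with the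
`G`-actions. -/
def IsFactorMap (G : Type*) {X Y : Type*} [Group G] [TopologicalSpace X] [TopologicalSpace Y]
    [MulAction G X] [MulAction G Y] (π : X → Y) : Prop :=
  Continuous π ∧ Function.Surjective π ∧ ∀ (g : G) (x : X), π (g • x) = g • π x

lemma compat_mul {G : Type*} [Group G] (Γ : ℕ → Subgroup G) [∀ i, (Γ i).Normal]
    (hΓ : ∀ i, Γ (i + 1) ≤ Γ i)
    {x y : ∀ i, G ⧸ Γ i} (hx : Compat Γ x) (hy : Compat Γ y) :
    Compat Γ (fun i => x i * y i) := by
  intro i g hg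
  change (QuotientGroup.mk g : G ⧸ Γ (i + 1)) = x (i + 1) * y (i + 1) at hg
  show (QuotientGroup.mk g : G ⧸ Γ i) = x i * y i
  obtain ⟨a, ha⟩ := QuotientGroup.mk_surjective (x (i + 1))
  obtain ⟨b, hb⟩ := QuotientGroup.mk_surjective (y (i + 1))
  have hg' : (QuotientGroup.mk g : G ⧸ Γ (i + 1)) = QuotientGroup.mk (a * b) := by
    rw [QuotientGroup.mk_mul, ha, hb]
    exact hg
  have h1 : (QuotientGroup.mk g : G ⧸ Γ i) = QuotientGroup.mk (a * b) :=
    QuotientGroup.eq.mpr (hΓ i (QuotientGroup.eq.mp hg'))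
  rw [h1, QuotientGroup.mk_mul, hx i a ha, hy i b hb]

lemma compat_inv {G : Type*} [Group G] (Γ : ℕ → Subgroup G) [∀ i, (Γ i).Normal]
    (hΓ : ∀ i, Γ (i + 1) ≤ Γ i) {x : ∀ i, G ⧸ Γ i} (hx : Compat Γ x) :
    Compat Γ (fun i => (x i)⁻¹) := by
  intro i g hg
  change (QuotientGroup.mk g : G ⧸ Γ (i + 1)) = (x (i + 1))⁻¹ at hg
  show (QuotientGroup.mk g : G ⧸ Γ i) = (x i)⁻¹
  obtain ⟨a, ha⟩ := QuotientGroup.mk_surjective (x (i + 1))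
  have hg' : (QuotientGroup.mk g : G ⧸ Γ (i + 1)) = QuotientGroup.mk a⁻¹ := by
    rw [← ha] at hg
    rw [hg, QuotientGroup.mk_inv]
  have h1 : (QuotientGroup.mk g : G ⧸ Γ i) = QuotientGroup.mk a⁻¹ :=
    QuotientGroup.eq.mpr (hΓ i (QuotientGroup.eq.mp hg'))
  rw [h1, QuotientGroup.mk_inv, hx i a ha]

lemma compat_one {G : Type*} [Group G] (Γ : ℕ → Subgroup G) [∀ i, (Γ i).Normal]
    (hΓ : ∀ i, Γ (i + 1) ≤ Γ i) :
    Compat Γ (fun i => (1 : G ⧸ Γ i)) := by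
  intro i g hg
  change (QuotientGroup.mk g : G ⧸ Γ (i + 1)) = 1 at hg
  show (QuotientGroup.mk g : G ⧸ Γ i) = 1
  rw [QuotientGroup.eq_one_iff] at hg ⊢
  exact hΓ i hg

/-- When every `Γᵢ` is normal, the odometer `←G` is a group under coordinatewise
multiplication. -/
def odoGroup {G : Type*} [Group G] (Γ : ℕ → Subgroup G) [∀ i, (Γ i).Normal]
    (hΓ : ∀ i, Γ (i + 1) ≤ Γ i) : Group (Subodometer Γ) where
  mul x y := ⟨fun i => x.1 i * y.1 i, compat_mul Γ hΓ x.2 y.2⟩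
  one := ⟨fun i => 1, compat_one Γ hΓ⟩
  inv x := ⟨fun i => (x.1 i)⁻¹, compat_inv Γ hΓ x.2⟩
  mul_assoc a b c := Subtype.ext (funext fun i => mul_assoc _ _ _)
  one_mul a := Subtype.ext (funext fun i => one_mul _)
  mul_one a := Subtype.ext (funext fun i => mul_one _)
  inv_mul_cancel a := Subtype.ext (funext fun i => inv_mul_cancel _)


section Aux

variable {G : Type*} [Group G]

lemma compat_down {Γ : ℕ → Subgroup G} {x : ∀ i, G ⧸ Γ i}
    (hx : Compat Γ x) : ∀ n (g : G), (QuotientGroup.mk g : G ⧸ Γ n) = x n →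
      ∀ i, i ≤ n → (QuotientGroup.mk g : G ⧸ Γ i) = x i := by
  intro n
  induction n with
  | zero =>
    intro g hg i hi
    obtain rfl : i = 0 := Nat.le_zero.mp hi
    exact hg
  | succ n ih =>
    intro g hg i hi
    rcases Nat.eq_or_lt_of_le hi with rfl | h
    · exact hg
    · exact ih g (hx n g hg) i (Nat.lt_succ_iff.mp h)

instance quotientDiscrete [TopologicalSpace G] [DiscreteTopology G] (H : Subgroup G) :
    DiscreteTopology (G ⧸ H) := by
  apply discreteTopology_iff_forall_isOpen.mpr
  intro s
  exact isOpen_coinduced.mpr (isOpen_discrete _)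

lemma subodometer_compactSpace [TopologicalSpace G] [DiscreteTopology G]
    (Γ : ℕ → Subgroup G) (hdec : ∀ i, Γ (i + 1) ≤ Γ i) (hfin : ∀ i, (Γ i).FiniteIndex)
    [hnorm : ∀ i, (Γ i).Normal] :
    CompactSpace (Subodometer Γ) := by
  haveI : ∀ i, Finite (G ⧸ Γ i) := fun i => Nat.finite_of_card_ne_zero (hfin i).index_ne_zero
  have hmapmk : ∀ (i : ℕ) (g : G),
      QuotientGroup.map (Γ (i + 1)) (Γ i) (MonoidHom.id G)
        (fun a ha => hdec i ha) (QuotientGroup.mk g) = QuotientGroup.mk g := by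
    intro i g
    rfl
  have hset : {x : ∀ i, G ⧸ Γ i | Compat Γ x} =
      ⋂ i, {x : ∀ i, G ⧸ Γ i |
        QuotientGroup.map (Γ (i + 1)) (Γ i) (MonoidHom.id G)
          (fun a ha => hdec i ha) (x (i + 1)) = x i} := by
    ext x
    simp only [Set.mem_setOf_eq, Set.mem_iInter]
    constructor
    · intro hx i
      obtain ⟨g, hg⟩ := QuotientGroup.mk_surjective (x (i + 1))
      rw [← hg, hmapmk]
      exact hx i g hg
    · intro h i g hg
      have := h i
      rw [← hg, hmapmk] at this
      exact this
  have hclosed : IsClosed {x : ∀ i, G ⧸ Γ i | Compat Γ x} := by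
    rw [hset]
    refine isClosed_iInter fun i => isClosed_eq ?_ (continuous_apply i)
    exact (continuous_of_discreteTopology).comp (continuous_apply (i + 1))
  exact isCompact_iff_compactSpace.mp hclosed.isCompact

end Aux

/-- Proposition `caractersubodometre`: if `p : ←G → X` is a factor map
from a `G`-odometer, then `H = p⁻¹(p(e))` is a closed subgroup of `←G`, the fibers of `p`
are exactly the cosets of `H`, and `p` induces a `G`-equivariant homeomorphism
`←G/H ≃ X`. -/
theorem statement2 {G X : Type*} [Group G] [Group.FG G] [TopologicalSpace G]
    [DiscreteTopology G] [MetricSpace X] [CompactSpace X] [MulAction G X]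
    (hX : ∀ g : G, Continuous fun x : X => g • x)
    (Γ : ℕ → Subgroup G) (hdec : ∀ i, Γ (i + 1) ≤ Γ i) (hfin : ∀ i, (Γ i).FiniteIndex)
    [hnorm : ∀ i, (Γ i).Normal]
    (p : Subodometer Γ → X) (hp : IsFactorMap G p) :
    let _inst : Group (Subodometer Γ) := odoGroup Γ hdec
    ∃ H : Subgroup (Subodometer Γ),
      (H : Set (Subodometer Γ)) = p ⁻¹' {p (1 : Subodometer Γ)} ∧
      IsClosed (H : Set (Subodometer Γ)) ∧
      (∀ g : Subodometer Γ,
        p ⁻¹' {p g} = (fun h : Subodometer Γ => g * h) '' (H : Set (Subodometer Γ))) ∧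
      ∃ φ : (Subodometer Γ ⧸ H) ≃ₜ X,
        (∀ y : Subodometer Γ, φ (QuotientGroup.mk y) = p y) ∧
        (∀ (g : G) (y : Subodometer Γ),
          φ (QuotientGroup.mk (g • y)) = g • φ (QuotientGroup.mk y)) := by
  intro _inst
  haveI : CompactSpace (Subodometer Γ) := subodometer_compactSpace Γ hdec hfin
  obtain ⟨hcont, hsurj, hequiv⟩ := hp
  have key : ∀ z x y : Subodometer Γ, p x = p y → p (z * x) = p (z * y) := by
    intro z x y hxy
    choose γ hγ using fun n => QuotientGroup.mk_surjective (z.1 n)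
    have hrep : ∀ n, ∀ i, i ≤ n → (QuotientGroup.mk (γ n) : G ⧸ Γ i) = z.1 i :=
      fun n => compat_down z.2 n (γ n) (hγ n)
    have hten : ∀ w : Subodometer Γ,
        Filter.Tendsto (fun n => p ((γ n) • w)) Filter.atTop (nhds (p (z * w))) := by
      intro w
      refine (hcont.tendsto (z * w)).comp ?_
      refine tendsto_subtype_rng.mpr ?_
      rw [tendsto_pi_nhds]
      intro i
      apply tendsto_nhds_of_eventually_eq
      filter_upwards [Filter.eventually_ge_atTop i] with n hn
      show ((γ n) • w).1 i = (z * w).1 i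
      obtain ⟨a, ha⟩ := QuotientGroup.mk_surjective (w.1 i)
      show (γ n) • w.1 i = z.1 i * w.1 i
      rw [← hrep n i hn, ← ha]
      rfl
    have heq : (fun n => p ((γ n) • x)) = fun n => p ((γ n) • y) := by
      funext n; rw [hequiv, hequiv, hxy]
    exact tendsto_nhds_unique (heq ▸ hten x) (hten y)
  have hfiber : ∀ g x : Subodometer Γ, p x = p g ↔ ∃ h, p h = p 1 ∧ g * h = x := by
    intro g x
    constructor
    · intro hx
      refine ⟨g⁻¹ * x, ?_, mul_inv_cancel_left g x⟩
      have h1 := key g⁻¹ x g hx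
      rwa [inv_mul_cancel] at h1
    · rintro ⟨h, hh, rfl⟩
      have h1 := key g h 1 hh
      rwa [mul_one] at h1
  refine ⟨{ carrier := p ⁻¹' {p 1}
            one_mem' := rfl
            mul_mem' := fun {a b} ha hb => by
              have h1 := key a b 1 hb
              rw [mul_one] at h1
              show p (a * b) = p 1
              rw [h1]; exact ha
            inv_mem' := fun {a} ha => by
              have h1 := key a⁻¹ 1 a (Eq.symm ha)
              rw [mul_one, inv_mul_cancel] at h1
              exact h1 }, rfl, IsClosed.preimage hcont isClosed_singleton, ?_, ?_⟩
  · intro g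
    ext x
    constructor
    · intro hx
      obtain ⟨h, hh, hgh⟩ := (hfiber g x).mp hx
      exact ⟨h, hh, hgh⟩
    · rintro ⟨h, hh, rfl⟩
      exact (hfiber g _).mpr ⟨h, hh, rfl⟩
  · have wd : ∀ a b : Subodometer Γ,
        (QuotientGroup.leftRel
          { carrier := p ⁻¹' {p 1}, one_mem' := rfl,
            mul_mem' := fun {a b} ha hb => by
              have h1 := key a b 1 hb
              rw [mul_one] at h1
              show p (a * b) = p 1
              rw [h1]; exact ha,
            inv_mem' := fun {a} ha => by
              have h1 := key a⁻¹ 1 a (Eq.symm ha)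
              rw [mul_one, inv_mul_cancel] at h1
              exact h1 }).r a b → p a = p b := by
      intro a b hab
      rw [QuotientGroup.leftRel_apply] at hab
      have h2 := key a (a⁻¹ * b) 1 hab
      rw [mul_inv_cancel_left, mul_one] at h2
      exact h2.symm
    set f := Quotient.lift p wd with hf
    have hmk : ∀ y : Subodometer Γ, f (QuotientGroup.mk y) = p y := fun y => rfl
    have hbij : Function.Bijective f := by
      constructor
      · intro a b hab
        induction a using Quotient.inductionOn with | h a => ?_
        induction b using Quotient.inductionOn with | h b => ?_
        replace hab : p a = p b := hab
        have h1 := key a⁻¹ b a hab.symm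
        rw [inv_mul_cancel] at h1
        exact Quotient.sound (QuotientGroup.leftRel_apply.mpr h1)
      · intro x
        obtain ⟨y, hy⟩ := hsurj x
        exact ⟨QuotientGroup.mk y, hy⟩
    have hcf : Continuous f := hcont.quotient_lift wd
    refine ⟨Continuous.homeoOfEquivCompactToT2 (f := Equiv.ofBijective f hbij) hcf, ?_, ?_⟩
    · intro y; rfl
    · intro g y
      show f (QuotientGroup.mk (g • y)) = g • f (QuotientGroup.mk y)
      rw [hmk, hmk, hequiv]
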